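/- Second row of the Gauss–Manin system: let 0 < α, β < 1 and set u(t) = ₂F₁(α, 1−β; 1; 1−t) and v(t) = (1−β)(1−t)·₂F₁(α, 2−β; 2; 1−t) for 0 < t < 1. Then t·u'(t) = −(1−β)·u(t) + (1−α)·(1−t)^{−1}·v(t) and t·v'(t) = −(1−β)·u(t) + (1−α)·v(t). -/

import Mathlib

set_option maxHeartbeats 1000000


open scoped BigOperators
open Real MeasureTheory Filter Set

noncomputable def poch (a : ℝ) (n : ℕ) : ℝ := ∏ i ∈ Finset.range n, (a + i)

noncomputable def F21 (a b c t : ℝ) : ℝ :=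
  ∑' n : ℕ, poch a n * poch b n / (poch c n * n.factorial) * t ^ n

noncomputable def F32 (a b c d e t : ℝ) : ℝ :=
  ∑' n : ℕ, poch a n * poch b n * poch c n / (poch d n * poch e n * n.factorial) * t ^ n

noncomputable def Beta (x y : ℝ) : ℝ := Real.Gamma x * Real.Gamma y / Real.Gamma (x + y)

lemma poch_zero (a : ℝ) : poch a 0 = 1 := by simp [poch]

lemma poch_succ (a : ℝ) (n : ℕ) : poch a (n + 1) = poch a n * (a + n) :=
  Finset.prod_range_succ _ _

lemma poch_succ' (a : ℝ) (n : ℕ) : poch a (n + 1) = a * poch (a + 1) n := by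
  rw [poch, Finset.prod_range_succ']
  simp only [Nat.cast_zero, add_zero, poch]
  rw [mul_comm]
  congr 1
  apply Finset.prod_congr rfl
  intro i _
  push_cast
  ring

lemma poch_pos {a : ℝ} (ha : 0 < a) (n : ℕ) : 0 < poch a n :=
  Finset.prod_pos fun i _ => by positivity

lemma poch_le {a b : ℝ} (ha : 0 ≤ a) (hab : a ≤ b) (n : ℕ) : poch a n ≤ poch b n :=
  Finset.prod_le_prod (fun i _ => by positivity) (fun i _ => by linarith)

lemma poch_one (n : ℕ) : poch 1 n = n.factorial := by
  induction n with
  | zero => simp [poch_zero]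
  | succ n ih => rw [poch_succ, ih, Nat.factorial_succ]; push_cast; ring

lemma poch_two (n : ℕ) : poch 2 n = (n + 1).factorial := by
  induction n with
  | zero => simp [poch_zero]
  | succ n ih =>
    rw [poch_succ, ih]
    have h : (n + 1 + 1).factorial = (n + 2) * (n + 1).factorial := Nat.factorial_succ (n + 1)
    rw [h]
    push_cast
    ring

/-- The coefficients of `₂F₁(α, 1-β; 1; ·)`. -/
noncomputable def acoef (α β : ℝ) (n : ℕ) : ℝ :=
  poch α n * poch (1 - β) n / (poch 1 n * n.factorial)

/-- The coefficients of `₂F₁(α, 2-β; 2; ·)`. -/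
noncomputable def gcoef (α β : ℝ) (n : ℕ) : ℝ :=
  poch α n * poch (2 - β) n / (poch 2 n * n.factorial)

lemma F21_eq_acoef (α β y : ℝ) : F21 α (1 - β) 1 y = ∑' n, acoef α β n * y ^ n := rfl

lemma F21_eq_gcoef (α β y : ℝ) : F21 α (2 - β) 2 y = ∑' n, gcoef α β n * y ^ n := rfl

lemma fac_pos' (n : ℕ) : (0:ℝ) < n.factorial := by exact_mod_cast Nat.factorial_pos n

lemma acoef_pos {α β : ℝ} (hα : 0 < α) (hβ : β < 1) (n : ℕ) : 0 < acoef α β n := by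
  have h1 := poch_pos hα n
  have h2 := poch_pos (by linarith : (0:ℝ) < 1 - β) n
  have h3 := poch_pos one_pos n
  have h4 := fac_pos' n
  unfold acoef
  positivity

lemma gcoef_pos {α β : ℝ} (hα : 0 < α) (hβ : β < 1) (n : ℕ) : 0 < gcoef α β n := by
  have h1 := poch_pos hα n
  have h2 := poch_pos (by linarith : (0:ℝ) < 2 - β) n
  have h3 := poch_pos two_pos n
  have h4 := fac_pos' n
  unfold gcoef
  positivity

lemma acoef_le {α β : ℝ} (hα0 : 0 < α) (hα1 : α < 1) (hβ0 : 0 < β) (hβ1 : β < 1) (n : ℕ) :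
    |acoef α β n| ≤ 1 := by
  rw [abs_of_pos (acoef_pos hα0 hβ1 n)]
  unfold acoef
  rw [div_le_one (by have := poch_pos one_pos n; have := fac_pos' n; positivity), poch_one]
  have h1 : poch α n ≤ (n.factorial : ℝ) := by
    have := poch_le hα0.le hα1.le n; rwa [poch_one] at this
  have h2 : poch (1 - β) n ≤ (n.factorial : ℝ) := by
    have := poch_le (by linarith : (0:ℝ) ≤ 1 - β) (by linarith : (1:ℝ) - β ≤ 1) n
    rwa [poch_one] at this
  have h3 := poch_pos (by linarith : (0:ℝ) < 1 - β) n
  calc poch α n * poch (1 - β) n ≤ (n.factorial : ℝ) * n.factorial :=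
        mul_le_mul h1 h2 h3.le (fac_pos' n).le
    _ = _ := rfl

lemma gcoef_le {α β : ℝ} (hα0 : 0 < α) (hα1 : α < 1) (hβ0 : 0 < β) (hβ1 : β < 1) (n : ℕ) :
    |gcoef α β n| ≤ 1 := by
  rw [abs_of_pos (gcoef_pos hα0 hβ1 n)]
  unfold gcoef
  rw [div_le_one (by have := poch_pos two_pos n; have := fac_pos' n; positivity), poch_two]
  have h1 : poch α n ≤ (n.factorial : ℝ) := by
    have := poch_le hα0.le hα1.le n; rwa [poch_one] at this
  have h2 : poch (2 - β) n ≤ ((n + 1).factorial : ℝ) := by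
    have := poch_le (by linarith : (0:ℝ) ≤ 2 - β) (by linarith : (2:ℝ) - β ≤ 2) n
    rwa [poch_two] at this
  have h3 := poch_pos (by linarith : (0:ℝ) < 2 - β) n
  calc poch α n * poch (2 - β) n ≤ (n.factorial : ℝ) * ((n + 1).factorial : ℝ) :=
        mul_le_mul h1 h2 h3.le (fac_pos' n).le
    _ = ((n + 1).factorial : ℝ) * n.factorial := by ring

lemma poch_rel {β : ℝ} (n : ℕ) :
    poch (2 - β) n * (1 - β) = poch (1 - β) n * (1 - β + n) := by
  have h1 := poch_succ (1 - β) n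
  have h2 := poch_succ' (1 - β) n
  have h3 : (1:ℝ) - β + 1 = 2 - β := by ring
  rw [h3] at h2
  rw [← h1, h2]
  ring

lemma acoef_zero (α β : ℝ) : acoef α β 0 = 1 := by simp [acoef, poch_zero]

lemma gcoef_zero (α β : ℝ) : gcoef α β 0 = 1 := by simp [gcoef, poch_zero]

lemma fac_succ' (n : ℕ) : ((n + 1).factorial : ℝ) = ((n:ℝ) + 1) * n.factorial := by
  rw [Nat.factorial_succ]; push_cast; ring

/-- First contiguous-relation coefficient identity. -/
lemma coef_id1 {α β : ℝ} (hβ : (1:ℝ) - β ≠ 0) (n : ℕ) :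
    ((n:ℝ) + 1) * acoef α β (n + 1)
      = ((n:ℝ) + 1 - β) * acoef α β n - (1 - α) * (1 - β) * gcoef α β n := by
  have hA := poch_succ α n
  have hB := poch_succ (1 - β) n
  have hrel := poch_rel (β := β) n
  have hfn : (n.factorial : ℝ) ≠ 0 := ne_of_gt (fac_pos' n)
  have hn1 : ((n:ℝ) + 1) ≠ 0 := by positivity
  unfold acoef gcoef
  rw [poch_one, poch_one, poch_two, hA, hB, fac_succ' n]
  have hC : poch (2 - β) n = poch (1 - β) n * (1 - β + n) / (1 - β) := by
    field_simp
    linarith [hrel]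
  rw [hC]
  field_simp
  ring

/-- Second contiguous-relation coefficient identity. -/
lemma coef_id2 {α β : ℝ} (hβ : (1:ℝ) - β ≠ 0) (n : ℕ) :
    acoef α β (n + 1)
      = ((n:ℝ) + 2) * gcoef α β (n + 1) - ((n:ℝ) + α) * gcoef α β n := by
  have hA := poch_succ α n
  have hB := poch_succ (1 - β) n
  have hCs := poch_succ (2 - β) n
  have hrel := poch_rel (β := β) n
  have hfn : (n.factorial : ℝ) ≠ 0 := ne_of_gt (fac_pos' n)
  have hn1 : ((n:ℝ) + 1) ≠ 0 := by positivity
  have hn2 : ((n:ℝ) + 2) ≠ 0 := by positivity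
  unfold acoef gcoef
  rw [poch_one, poch_two, poch_two, hA, hB, hCs]
  have hC : poch (2 - β) n = poch (1 - β) n * (1 - β + n) / (1 - β) := by
    field_simp
    linarith [hrel]
  rw [hC]
  simp only [fac_succ']
  field_simp
  push_cast
  ring

/-- Term-by-term differentiation of a power series with bounded coefficients. -/
lemma hasDerivAt_tsum_pow (a : ℕ → ℝ) (ha : ∀ n, |a n| ≤ 1) {x : ℝ} (hx : |x| < 1) :
    HasDerivAt (fun y => ∑' n, a n * y ^ n) (∑' n, a n * (n * x ^ (n - 1))) x := by
  set r : ℝ := (1 + |x|) / 2 with hr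
  have h0 : 0 ≤ |x| := abs_nonneg x
  have hr0 : 0 < r := by positivity
  have hr1 : r < 1 := by rw [hr]; linarith
  have hxr : |x| < r := by rw [hr]; linarith
  have hsum1 : Summable (fun n : ℕ => ((n : ℝ) + 1) * r ^ n) := by
    have h1 := summable_pow_mul_geometric_of_norm_lt_one (R := ℝ) 1
      (r := r) (by rwa [Real.norm_eq_abs, abs_of_pos hr0])
    have h2 : Summable (fun n : ℕ => r ^ n) :=
      summable_geometric_of_lt_one hr0.le hr1
    refine (h1.add h2).congr fun n => ?_
    push_cast
    ring
  have hu : Summable (fun n : ℕ => (n : ℝ) * r ^ (n - 1)) := by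
    rw [← summable_nat_add_iff 1]
    refine hsum1.congr fun n => ?_
    simp
  have hmem : x ∈ Ioo (-r) r := by
    rw [mem_Ioo]; constructor <;> [linarith [neg_abs_le x]; linarith [le_abs_self x]]
  have hbound : ∀ (n : ℕ) (y : ℝ), y ∈ Ioo (-r) r →
      ‖a n * ((n:ℝ) * y ^ (n - 1))‖ ≤ (n:ℝ) * r ^ (n - 1) := by
    intro n y hy
    have hyr : |y| ≤ r := by
      rw [abs_le]; exact ⟨hy.1.le, hy.2.le⟩
    have heq : ‖a n * ((n : ℝ) * y ^ (n - 1))‖ = |a n| * ((n : ℝ) * |y| ^ (n - 1)) := by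
      rw [norm_mul, norm_mul, Real.norm_eq_abs, Real.norm_eq_abs, Real.norm_eq_abs,
        abs_pow, Nat.abs_cast]
    rw [heq]
    calc |a n| * ((n : ℝ) * |y| ^ (n - 1)) ≤ 1 * ((n : ℝ) * r ^ (n - 1)) := by
          apply mul_le_mul (ha n) ?_ (by positivity) zero_le_one
          exact mul_le_mul_of_nonneg_left (pow_le_pow_left₀ (abs_nonneg y) hyr _)
            (Nat.cast_nonneg n)
      _ = (n : ℝ) * r ^ (n - 1) := one_mul _
  have hsum0 : Summable (fun n => a n * x ^ n) := by
    refine Summable.of_norm_bounded (summable_geometric_of_lt_one hr0.le hr1) fun n => ?_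
    rw [norm_mul, Real.norm_eq_abs, Real.norm_eq_abs, abs_pow]
    calc |a n| * |x| ^ n ≤ 1 * r ^ n := by
          apply mul_le_mul (ha n) (pow_le_pow_left₀ (abs_nonneg x) hxr.le n) (by positivity)
            zero_le_one
      _ = r ^ n := one_mul _
  exact hasDerivAt_tsum_of_isPreconnected hu isOpen_Ioo isPreconnected_Ioo
    (fun n y _ => (hasDerivAt_pow n y).const_mul (a n)) hbound hmem hsum0 hmem

/-- Summability of a power series with bounded coefficients, `|x| < 1`. -/
lemma summable_of_abs_le_one (a : ℕ → ℝ) (ha : ∀ n, |a n| ≤ 1) {x : ℝ} (hx : |x| < 1) :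
    Summable (fun n => a n * x ^ n) := by
  refine Summable.of_norm_bounded (summable_geometric_of_lt_one (abs_nonneg x) hx)
    fun n => ?_
  rw [norm_mul, Real.norm_eq_abs, Real.norm_eq_abs, abs_pow]
  calc |a n| * |x| ^ n ≤ 1 * |x| ^ n :=
        mul_le_mul_of_nonneg_right (ha n) (by positivity)
    _ = |x| ^ n := one_mul _

/-- Summability of the term-by-term derivative series. -/
lemma summable_deriv_of_abs_le_one (a : ℕ → ℝ) (ha : ∀ n, |a n| ≤ 1) {x : ℝ} (hx : |x| < 1) :
    Summable (fun n => a n * ((n:ℝ) * x ^ (n - 1))) := by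
  have h1 := summable_pow_mul_geometric_of_norm_lt_one (R := ℝ) 1
    (r := |x|) (by rwa [Real.norm_eq_abs, abs_abs])
  have h2 : Summable (fun n : ℕ => |x| ^ n) :=
    summable_geometric_of_lt_one (abs_nonneg x) hx
  have h3 : Summable (fun n : ℕ => ((n:ℝ) + 1) * |x| ^ n) := by
    refine (h1.add h2).congr fun n => ?_; push_cast; ring
  have h4 : Summable (fun n : ℕ => (n:ℝ) * |x| ^ (n - 1)) := by
    rw [← summable_nat_add_iff 1]
    refine h3.congr fun n => ?_; simp
  refine Summable.of_norm_bounded h4 fun n => ?_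
  rw [norm_mul, Real.norm_eq_abs, Real.norm_eq_abs, abs_mul, Nat.abs_cast, abs_pow]
  calc |a n| * ((n:ℝ) * |x| ^ (n - 1)) ≤ 1 * ((n:ℝ) * |x| ^ (n - 1)) := by
        apply mul_le_mul_of_nonneg_right (ha n); positivity
    _ = (n:ℝ) * |x| ^ (n - 1) := one_mul _

theorem gauss_manin_second_row (α β t : ℝ) (hα0 : 0 < α) (hα1 : α < 1) (hβ0 : 0 < β)
    (hβ1 : β < 1) (ht0 : 0 < t) (ht1 : t < 1) :
    (t * deriv (fun s => F21 α (1 - β) 1 (1 - s)) t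
      = -(1 - β) * F21 α (1 - β) 1 (1 - t)
        + (1 - α) * (1 - t)⁻¹ * ((1 - β) * (1 - t) * F21 α (2 - β) 2 (1 - t))) ∧
    (t * deriv (fun s => (1 - β) * (1 - s) * F21 α (2 - β) 2 (1 - s)) t
      = -(1 - β) * F21 α (1 - β) 1 (1 - t)
        + (1 - α) * ((1 - β) * (1 - t) * F21 α (2 - β) 2 (1 - t))) := by
  have hβne : (1:ℝ) - β ≠ 0 := by intro h; nlinarith
  have hx0 : 0 < 1 - t := by linarith
  have hxabs : |1 - t| < 1 := by rw [abs_of_pos hx0]; linarith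
  set a : ℕ → ℝ := acoef α β with hadef
  set g : ℕ → ℝ := gcoef α β with hgdef
  have ha_le : ∀ n, |a n| ≤ 1 := acoef_le hα0 hα1 hβ0 hβ1
  have hg_le : ∀ n, |g n| ≤ 1 := gcoef_le hα0 hα1 hβ0 hβ1
  -- derivatives of the two power series at x = 1 - t
  have hDU := hasDerivAt_tsum_pow a ha_le hxabs
  have hDG := hasDerivAt_tsum_pow g hg_le hxabs
  obtain ⟨D, hD⟩ := summable_deriv_of_abs_le_one a ha_le hxabs
  obtain ⟨E, hE⟩ := summable_deriv_of_abs_le_one g hg_le hxabs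
  obtain ⟨U, hU⟩ := summable_of_abs_le_one a ha_le hxabs
  obtain ⟨Gx, hG⟩ := summable_of_abs_le_one g hg_le hxabs
  set x : ℝ := 1 - t with hxdef
  have hDU' : HasDerivAt (fun y => ∑' n, a n * y ^ n) D x := by rwa [hD.tsum_eq] at hDU
  have hDG' : HasDerivAt (fun y => ∑' n, g n * y ^ n) E x := by rwa [hE.tsum_eq] at hDG
  -- x times the derivative series
  have hxD : HasSum (fun n : ℕ => (n:ℝ) * a n * x ^ n) (x * D) := by
    refine (hD.mul_left x).congr_fun fun n => ?_
    cases n with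
    | zero => simp
    | succ m => simp only [Nat.add_sub_cancel]; push_cast; ring
  have hxE : HasSum (fun n : ℕ => (n:ℝ) * g n * x ^ n) (x * E) := by
    refine (hE.mul_left x).congr_fun fun n => ?_
    cases n with
    | zero => simp
    | succ m => simp only [Nat.add_sub_cancel]; push_cast; ring
  -- shifted derivative series
  have hD1 : HasSum (fun n : ℕ => a (n + 1) * (((n:ℝ) + 1) * x ^ n)) D := by
    have hshift : HasSum (fun n : ℕ => a n * ((n:ℝ) * x ^ (n - 1)))
        (D + ∑ i ∈ Finset.range 1, a i * ((i:ℝ) * x ^ (i - 1))) := by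
      simpa using hD
    have := (hasSum_nat_add_iff (f := fun n : ℕ => a n * ((n:ℝ) * x ^ (n - 1))) 1).mpr hshift
    refine this.congr_fun fun n => ?_
    simp only [Nat.add_sub_cancel]
    push_cast
    ring
  -- identity 1 : D = x*D + (1-β)*U - (1-α)*(1-β)*Gx
  have hcomb1 : HasSum (fun n : ℕ => (((n:ℝ) + 1 - β) * a n - (1 - α) * (1 - β) * g n) * x ^ n)
      (x * D + (1 - β) * U - (1 - α) * (1 - β) * Gx) := by
    refine ((hxD.add (hU.mul_left (1 - β))).sub (hG.mul_left ((1 - α) * (1 - β)))).congr_fun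
      fun n => ?_
    ring
  have hid1 : D = x * D + (1 - β) * U - (1 - α) * (1 - β) * Gx := by
    refine hD1.unique (hcomb1.congr_fun fun n => ?_)
    rw [← coef_id1 (α := α) hβne n]
    ring
  -- identity 2 : U = Gx + x*E - x*(x*E) - α*(x*Gx)
  have hU1 : HasSum (fun n : ℕ => a (n + 1) * x ^ (n + 1)) (U - 1) := by
    have hshift : HasSum (fun n : ℕ => a n * x ^ n)
        ((U - 1) + ∑ i ∈ Finset.range 1, a i * x ^ i) := by
      simpa [hadef, acoef_zero] using hU
    exact (hasSum_nat_add_iff (f := fun n : ℕ => a n * x ^ n) 1).mpr hshift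
  have hP : HasSum (fun n : ℕ => ((n:ℝ) + 1) * g n * x ^ n) (Gx + x * E) := by
    refine (hG.add hxE).congr_fun fun n => ?_
    ring
  have hP1 : HasSum (fun n : ℕ => ((n:ℝ) + 2) * g (n + 1) * x ^ (n + 1)) (Gx + x * E - 1) := by
    have hshift : HasSum (fun n : ℕ => ((n:ℝ) + 1) * g n * x ^ n)
        ((Gx + x * E - 1) + ∑ i ∈ Finset.range 1, ((i:ℝ) + 1) * g i * x ^ i) := by
      simpa [hgdef, gcoef_zero] using hP
    have := (hasSum_nat_add_iff (f := fun n : ℕ => ((n:ℝ) + 1) * g n * x ^ n) 1).mpr hshift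
    refine this.congr_fun fun n => ?_
    push_cast
    ring
  have hQ : HasSum (fun n : ℕ => ((n:ℝ) + α) * g n * x ^ (n + 1))
      (x * (x * E) + α * (x * Gx)) := by
    refine ((hxE.mul_left x).add ((hG.mul_left x).mul_left α)).congr_fun fun n => ?_
    ring
  have hid2 : U = Gx + x * E - x * (x * E) - α * (x * Gx) := by
    have huniq : U - 1 = Gx + x * E - 1 - (x * (x * E) + α * (x * Gx)) := by
      refine hU1.unique ((hP1.sub hQ).congr_fun fun n => ?_)
      rw [hadef, hgdef, coef_id2 (α := α) hβne n]
      ring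
    linarith
  -- derivatives of the composed functions
  have hinner : HasDerivAt (fun s : ℝ => 1 - s) (-1) t := by
    simpa using ((hasDerivAt_id t).const_sub 1)
  have hderivU : HasDerivAt (fun s => F21 α (1 - β) 1 (1 - s)) (D * (-1)) t := by
    have hcomp := HasDerivAt.comp t (by rw [hxdef] at hDU'; exact hDU') hinner
    have hfun : ((fun y => ∑' n, a n * y ^ n) ∘ fun s : ℝ => 1 - s)
        = fun s => F21 α (1 - β) 1 (1 - s) := by
      funext s
      simp [Function.comp, F21_eq_acoef, hadef]
    rwa [hfun] at hcomp
  have hderivV : HasDerivAt (fun s => (1 - β) * (1 - s) * F21 α (2 - β) 2 (1 - s))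
      (((1 - β) * Gx + ((1 - β) * x) * E) * (-1)) t := by
    have hGAt : HasDerivAt (fun y => F21 α (2 - β) 2 y) E x := by
      have : (fun y => F21 α (2 - β) 2 y) = fun y => ∑' n, g n * y ^ n := by
        funext y; rw [F21_eq_gcoef, ← hgdef]
      rw [this]
      exact hDG'
    have h1 : HasDerivAt (fun y : ℝ => (1 - β) * y) (1 - β) x := by
      simpa using (hasDerivAt_id x).const_mul (1 - β)
    have hmul := h1.mul hGAt
    have hGval : F21 α (2 - β) 2 x = Gx := by
      rw [F21_eq_gcoef, ← hgdef]; exact hG.tsum_eq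
    rw [hGval] at hmul
    have hcomp := HasDerivAt.comp t (by rw [hxdef] at hmul; exact hmul) hinner
    have hfun : ((fun y => (1 - β) * y * F21 α (2 - β) 2 y) ∘ fun s : ℝ => 1 - s)
        = fun s => (1 - β) * (1 - s) * F21 α (2 - β) 2 (1 - s) := by
      funext s; simp [Function.comp]
    exact hcomp
  have hFU : F21 α (1 - β) 1 (1 - t) = U := by
    rw [F21_eq_acoef, ← hadef, ← hxdef]; exact hU.tsum_eq
  have hFG : F21 α (2 - β) 2 (1 - t) = Gx := by
    rw [F21_eq_gcoef, ← hgdef, ← hxdef]; exact hG.tsum_eq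
  have htx : t = 1 - x := by rw [hxdef]; ring
  have hxne : (1:ℝ) - t ≠ 0 := ne_of_gt hx0
  constructor
  · rw [hderivU.deriv, hFU, hFG]
    have hrhs : (1 - α) * (1 - t)⁻¹ * ((1 - β) * (1 - t) * Gx)
        = (1 - α) * ((1 - β) * Gx) := by
      field_simp
    rw [hrhs, htx]
    nlinarith [hid1]
  · rw [hderivV.deriv, hFU, hFG, htx]
    nlinarith [hid2]
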